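/- Let n ≥ 2 and 1 ≤ k ≤ n − 1. Let ψ_k : (Fin n → Bool) → ℝ be the unit vector with ψ_k(s) = 1/√C(n,k) if s has exactly k true entries and ψ_k(s) = 0 otherwise. Let M be the real matrix indexed by (Fin n → Bool) with M(s,t) = 2 if s and t agree at every coordinate i ≥ 2 and ((s(0), s(1)) = (false, true) and (t(0), t(1)) = (true, false), or (s(0), s(1)) = (true, false) and (t(0), t(1)) = (false, true)), and M(s,t) = 0 otherwise. Then Σ_{s,t} ψ_k(s)·M(s,t)·ψ_k(t) = 4·C(n − 2, k − 1)/C(n, k) = 4k(n − k)/(n(n − 1)). -/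
import Mathlib

open Finset

lemma countA (n k : ℕ) (i0 i1 : Fin n) (h : i0 ≠ i1) (hk : 1 ≤ k) :
    (Finset.univ.filter (fun s : Fin n → Bool =>
      s i0 = false ∧ s i1 = true ∧ (Finset.univ.filter fun i => s i = true).card = k)).card
    = Nat.choose (n-2) (k-1) := by
  classical
  have hbase : ((Finset.univ.erase i0).erase i1).card = n - 2 := by
    rw [Finset.card_erase_of_mem (by simp [Ne.symm h]), Finset.card_erase_of_mem (by simp)]
    simp only [Finset.card_univ, Fintype.card_fin]; omega
  rw [← hbase, ← Finset.card_powersetCard]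
  apply Finset.card_bij'
    (i := fun s _ => (Finset.univ.filter fun i => s i = true).erase i1)
    (j := fun B _ => fun i => decide (i = i1 ∨ i ∈ B))
  · intro s hs
    simp only [Finset.mem_filter] at hs
    obtain ⟨-, h0, h1, hc⟩ := hs
    rw [Finset.mem_powersetCard]
    constructor
    · intro x hx
      simp only [Finset.mem_erase, Finset.mem_filter] at hx ⊢
      refine ⟨hx.1, ?_, Finset.mem_univ _⟩
      rintro rfl; simp [h0] at hx
    · rw [Finset.card_erase_of_mem (by simp [h1]), hc]
  · intro B hB
    rw [Finset.mem_powersetCard] at hB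
    obtain ⟨hsub, hcard⟩ := hB
    have hi0 : i0 ∉ B := fun hx => by simpa [h] using (hsub hx)
    have hi1 : i1 ∉ B := fun hx => by simpa using (hsub hx)
    simp only [Finset.mem_filter, Finset.mem_univ, true_and]
    refine ⟨by simp [h, hi0], by simp, ?_⟩
    have : (Finset.univ.filter fun i => (decide (i = i1 ∨ i ∈ B)) = true) = insert i1 B := by
      ext x; simp [Finset.mem_insert]
    rw [this, Finset.card_insert_of_notMem hi1, hcard]
    omega
  · intro s hs
    simp only [Finset.mem_filter] at hs
    obtain ⟨-, h0, h1, hc⟩ := hs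
    funext i
    by_cases hi : i = i1
    · simp [hi, h1]
    · simp only [Finset.mem_erase, Finset.mem_filter, hi, false_or, decide_eq_true_eq]
      by_cases hsi : s i = true <;> simp [hsi, hi]
  · intro B hB
    rw [Finset.mem_powersetCard] at hB
    have hi1 : i1 ∉ B := fun hx => by simpa using (hB.1 hx)
    ext x
    simp only [Finset.mem_erase, Finset.mem_filter, Finset.mem_univ, true_and,
      decide_eq_true_eq]
    constructor
    · rintro ⟨hx1, (rfl | hxB)⟩
      · exact absurd rfl hx1
      · exact hxB
    · intro hx; exact ⟨fun hh => hi1 (hh ▸ hx), Or.inr hx⟩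

lemma binom_id (n k : ℕ) (h1 : 1 ≤ k) (hn : 2 ≤ n) (h2 : k ≤ n - 1) :
    k * (n - k) * Nat.choose n k = n * (n-1) * Nat.choose (n-2) (k-1) := by
  obtain ⟨a, rfl⟩ : ∃ a, n = a + 2 := ⟨n - 2, by omega⟩
  obtain ⟨b, rfl⟩ : ∃ b, k = b + 1 := ⟨k - 1, by omega⟩
  have hba : b ≤ a := by omega
  have H1 : (a+2) * Nat.choose (a+1) b = Nat.choose (a+2) (b+1) * (b+1) :=
    Nat.add_one_mul_choose_eq (a+1) b
  have H2 : Nat.choose (a+1) b * (a+1-b) = (a+1) * Nat.choose a b := by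
    have e1 : (a+1) * Nat.choose a (a-b) = Nat.choose (a+1) (a-b+1) * (a-b+1) :=
      Nat.add_one_mul_choose_eq a (a-b)
    have e2 : Nat.choose a (a-b) = Nat.choose a b := by
      rw [Nat.choose_symm hba]
    have e3 : Nat.choose (a+1) (a-b+1) = Nat.choose (a+1) b := by
      have : a - b + 1 = (a+1) - b := by omega
      rw [this, Nat.choose_symm (by omega)]
    have e4 : a - b + 1 = a + 1 - b := by omega
    rw [e2, e3, e4] at e1
    omega
  have key : a + 2 - (b+1) = a + 1 - b := by omega
  simp only [key, Nat.add_sub_cancel]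
  calc (b+1) * (a+1-b) * Nat.choose (a+2) (b+1)
      = (Nat.choose (a+2) (b+1) * (b+1)) * (a+1-b) := by ring
    _ = ((a+2) * Nat.choose (a+1) b) * (a+1-b) := by rw [H1]
    _ = (a+2) * (Nat.choose (a+1) b * (a+1-b)) := by ring
    _ = (a+2) * ((a+1) * Nat.choose a b) := by rw [H2]
    _ = (a+2) * (a+1) * Nat.choose a b := by ring

theorem stmt_5 (n k : ℕ) (hn : 2 ≤ n) (hk1 : 1 ≤ k) (hk2 : k ≤ n - 1)
    (ψ : (Fin n → Bool) → ℝ)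
    (hψ : ∀ s : Fin n → Bool,
      ψ s = if (Finset.univ.filter fun i => s i = true).card = k
        then 1 / Real.sqrt (Nat.choose n k) else 0)
    (M : (Fin n → Bool) → (Fin n → Bool) → ℝ)
    (hM : ∀ s t : Fin n → Bool, M s t =
      if (∀ i : Fin n, 2 ≤ (i : ℕ) → s i = t i) ∧
          ((s ⟨0, by omega⟩ = false ∧ s ⟨1, by omega⟩ = true ∧
            t ⟨0, by omega⟩ = true ∧ t ⟨1, by omega⟩ = false) ∨
           (s ⟨0, by omega⟩ = true ∧ s ⟨1, by omega⟩ = false ∧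
            t ⟨0, by omega⟩ = false ∧ t ⟨1, by omega⟩ = true))
        then 2 else 0) :
    (∑ s : Fin n → Bool, ∑ t : Fin n → Bool, ψ s * M s t * ψ t) =
        4 * (Nat.choose (n - 2) (k - 1) : ℝ) / (Nat.choose n k : ℝ) ∧
    (∑ s : Fin n → Bool, ∑ t : Fin n → Bool, ψ s * M s t * ψ t) =
        4 * (k : ℝ) * ((n : ℝ) - (k : ℝ)) / ((n : ℝ) * ((n : ℝ) - 1)) := by
  classical
  have h0n : 0 < n := by omega
  have h1n : 1 < n := by omega
  set i0 : Fin n := ⟨0, by omega⟩ with hi0def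
  set i1 : Fin n := ⟨1, by omega⟩ with hi1def
  have h01 : i0 ≠ i1 := by simp [hi0def, hi1def, Fin.ext_iff]
  set σ : (Fin n → Bool) → (Fin n → Bool) := fun s => s ∘ (Equiv.swap i0 i1) with hσdef
  have hσ0 : ∀ s, σ s i0 = s i1 := fun s => by simp [hσdef]
  have hσ1 : ∀ s, σ s i1 = s i0 := fun s => by simp [hσdef]
  have hσi : ∀ s (i : Fin n), i ≠ i0 → i ≠ i1 → σ s i = s i := fun s i h1 h2 => by
    simp [hσdef, Equiv.swap_apply_of_ne_of_ne h1 h2]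
  have hge2 : ∀ i : Fin n, i ≠ i0 → i ≠ i1 → 2 ≤ (i : ℕ) := by
    intro i hi1 hi2
    simp only [hi0def, hi1def, Ne, Fin.ext_iff] at hi1 hi2
    omega
  have hwt : ∀ s, (Finset.univ.filter fun i => σ s i = true).card
      = (Finset.univ.filter fun i => s i = true).card := by
    intro s
    apply Finset.card_bij (fun i _ => Equiv.swap i0 i1 i)
    · intro a ha
      simp only [Finset.mem_filter, Finset.mem_univ, true_and, hσdef, Function.comp] at ha ⊢
      exact ha
    · intro a _ b _ hab
      exact (Equiv.swap i0 i1).injective hab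
    · intro b hb
      refine ⟨Equiv.swap i0 i1 b, ?_, by simp⟩
      simp only [Finset.mem_filter, Finset.mem_univ, true_and, hσdef, Function.comp] at hb ⊢
      simpa using hb
  -- rewrite M
  have hM' : ∀ s t : Fin n → Bool, M s t =
      if (t = σ s ∧ ((s i0 = false ∧ s i1 = true) ∨ (s i0 = true ∧ s i1 = false)))
      then 2 else 0 := by
    intro s t
    rw [hM s t]
    refine if_congr ⟨?_, ?_⟩ rfl rfl
    · rintro ⟨hge, hcase⟩
      constructor
      · funext i
        by_cases hii0 : i = i0
        · subst hii0
          rw [hσ0]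
          rcases hcase with ⟨a, b, c, d⟩ | ⟨a, b, c, d⟩ <;> rw [c, b]
        · by_cases hii1 : i = i1
          · subst hii1
            rw [hσ1]
            rcases hcase with ⟨a, b, c, d⟩ | ⟨a, b, c, d⟩ <;> rw [d, a]
          · rw [hσi s i hii0 hii1]
            exact (hge i (hge2 i hii0 hii1)).symm
      · rcases hcase with ⟨a, b, _, _⟩ | ⟨a, b, _, _⟩
        · exact Or.inl ⟨a, b⟩
        · exact Or.inr ⟨a, b⟩
    · rintro ⟨rfl, hcase⟩
      refine ⟨fun i hi => ?_, ?_⟩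
      · have hne0 : i ≠ i0 := by
          simp only [hi0def, Ne, Fin.ext_iff]; omega
        have hne1 : i ≠ i1 := by
          simp only [hi1def, Ne, Fin.ext_iff]; omega
        exact (hσi s i hne0 hne1).symm
      · rcases hcase with ⟨a, b⟩ | ⟨a, b⟩
        · exact Or.inl ⟨a, b, by rw [hσ0, b], by rw [hσ1, a]⟩
        · exact Or.inr ⟨a, b, by rw [hσ0, b], by rw [hσ1, a]⟩
  set c : ℝ := (Nat.choose n k : ℝ) with hcdef
  have hcpos : 0 < c := by
    have : 0 < Nat.choose n k := Nat.choose_pos (by omega)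
    rw [hcdef]
    exact_mod_cast this
  have hψσ : ∀ s, ψ (σ s) = ψ s := by
    intro s
    rw [hψ, hψ, hwt s]
  have sq : ∀ s, ψ s * ψ s =
      if (Finset.univ.filter fun i => s i = true).card = k then 1/c else 0 := by
    intro s
    rw [hψ s]
    by_cases h : (Finset.univ.filter fun i => s i = true).card = k
    · rw [if_pos h, if_pos h, div_mul_div_comm, one_mul, Real.mul_self_sqrt hcpos.le]
    · rw [if_neg h, if_neg h, mul_zero]
  have inner : ∀ s : Fin n → Bool, (∑ t : Fin n → Bool, ψ s * M s t * ψ t) =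
      if ((s i0 = false ∧ s i1 = true) ∨ (s i0 = true ∧ s i1 = false))
      then 2 * (ψ s * ψ s) else 0 := by
    intro s
    by_cases hc : ((s i0 = false ∧ s i1 = true) ∨ (s i0 = true ∧ s i1 = false))
    · rw [if_pos hc, Finset.sum_eq_single (σ s)]
      · rw [hM' s (σ s), if_pos ⟨rfl, hc⟩, hψσ]; ring
      · intro t _ ht
        rw [hM' s t, if_neg (by tauto)]; ring
      · intro h; exact absurd (Finset.mem_univ _) h
    · rw [if_neg hc]
      apply Finset.sum_eq_zero
      intro t _
      rw [hM' s t, if_neg (by tauto)]; ring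
  have main : (∑ s : Fin n → Bool, ∑ t : Fin n → Bool, ψ s * M s t * ψ t)
      = 4 * (Nat.choose (n - 2) (k - 1) : ℝ) / c := by
    calc (∑ s : Fin n → Bool, ∑ t : Fin n → Bool, ψ s * M s t * ψ t)
        = ∑ s : Fin n → Bool,
            (if (((s i0 = false ∧ s i1 = true) ∨ (s i0 = true ∧ s i1 = false)) ∧
              (Finset.univ.filter fun i => s i = true).card = k) then 2/c else 0) := by
          apply Finset.sum_congr rfl
          intro s _
          rw [inner s, sq s]
          by_cases h1 : ((s i0 = false ∧ s i1 = true) ∨ (s i0 = true ∧ s i1 = false)) <;>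
            by_cases h2 : (Finset.univ.filter fun i => s i = true).card = k <;>
            simp [h1, h2] <;> ring
      _ = ((Finset.univ.filter (fun s : Fin n → Bool =>
              ((s i0 = false ∧ s i1 = true) ∨ (s i0 = true ∧ s i1 = false)) ∧
              (Finset.univ.filter fun i => s i = true).card = k)).card : ℝ) * (2/c) := by
          rw [Finset.sum_ite, Finset.sum_const, Finset.sum_const_zero, add_zero,
            nsmul_eq_mul]
      _ = 4 * (Nat.choose (n - 2) (k - 1) : ℝ) / c := by
          have hsplit : (Finset.univ.filter (fun s : Fin n → Bool =>
              ((s i0 = false ∧ s i1 = true) ∨ (s i0 = true ∧ s i1 = false)) ∧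
              (Finset.univ.filter fun i => s i = true).card = k))
            = (Finset.univ.filter (fun s : Fin n → Bool =>
                s i0 = false ∧ s i1 = true ∧
                (Finset.univ.filter fun i => s i = true).card = k))
              ∪ (Finset.univ.filter (fun s : Fin n → Bool =>
                s i1 = false ∧ s i0 = true ∧
                (Finset.univ.filter fun i => s i = true).card = k)) := by
            ext s
            simp only [Finset.mem_filter, Finset.mem_union, Finset.mem_univ, true_and]
            tauto
          have hdisj : Disjoint (Finset.univ.filter (fun s : Fin n → Bool =>
                s i0 = false ∧ s i1 = true ∧
                (Finset.univ.filter fun i => s i = true).card = k))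
              (Finset.univ.filter (fun s : Fin n → Bool =>
                s i1 = false ∧ s i0 = true ∧
                (Finset.univ.filter fun i => s i = true).card = k)) := by
            rw [Finset.disjoint_left]
            intro s hs hs'
            simp only [Finset.mem_filter] at hs hs'
            rw [hs.2.1] at hs'
            exact absurd hs'.2.2.1 (by simp)
          rw [hsplit, Finset.card_union_of_disjoint hdisj,
            countA n k i0 i1 h01 hk1, countA n k i1 i0 h01.symm hk1]
          push_cast
          ring
  refine ⟨main, ?_⟩
  rw [main]
  have hid := binom_id n k hk1 hn hk2
  have hcast : ((n - k : ℕ) : ℝ) = (n : ℝ) - (k : ℝ) := by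
    have : k ≤ n := by omega
    push_cast [this]; ring
  have hkn : k ≤ n := by omega
  have h1n' : 1 ≤ n := by omega
  have hidR : (k : ℝ) * ((n : ℝ) - (k : ℝ)) * c = (n : ℝ) * ((n : ℝ) - 1) *
      (Nat.choose (n-2) (k-1) : ℝ) := by
    have h := congrArg (fun x : ℕ => (x : ℝ)) hid
    simp only [Nat.cast_mul, Nat.cast_sub hkn, Nat.cast_sub h1n', Nat.cast_one] at h
    rw [hcdef]
    exact h
  have hne1 : (n : ℝ) ≠ 0 := by positivity
  have hne2 : (n : ℝ) - 1 ≠ 0 := by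
    have : (1:ℝ) < (n:ℝ) := by exact_mod_cast h1n
    linarith
  have hngt : (1:ℝ) < (n:ℝ) := by exact_mod_cast h1n
  have hprod : (0:ℝ) < (n:ℝ) * ((n:ℝ)-1) := mul_pos (by linarith) (by linarith)
  rw [div_eq_div_iff hcpos.ne' hprod.ne']
  nlinarith [hidR]
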